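/- Let F be the free group on generators a, b acting on ℤ² via a ↦ α and b ↦ β, where α(x,y) = (x+2y, y+1) and β(x,y) = (x+1, 2x+y). Then the stabilizer of (0,0) in F is not finitely generated. -/

import Mathlib

/-- The invertible affine map `α(x,y) = (x+2y, y+1)` of `ℤ²`. -/
def alphaPerm : Equiv.Perm (ℤ × ℤ) where
  toFun p := (p.1 + 2 * p.2, p.2 + 1)
  invFun p := (p.1 - 2 * (p.2 - 1), p.2 - 1)
  left_inv := fun ⟨x, y⟩ => by simp only [Prod.mk.injEq]; constructor <;> ring
  right_inv := fun ⟨x, y⟩ => by simp only [Prod.mk.injEq]; constructor <;> ring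

/-- The invertible affine map `β(x,y) = (x+1, 2x+y)` of `ℤ²`. -/
def betaPerm : Equiv.Perm (ℤ × ℤ) where
  toFun p := (p.1 + 1, 2 * p.1 + p.2)
  invFun p := (p.1 - 1, p.2 - 2 * (p.1 - 1))
  left_inv := fun ⟨x, y⟩ => by simp only [Prod.mk.injEq]; constructor <;> ring
  right_inv := fun ⟨x, y⟩ => by simp only [Prod.mk.injEq]; constructor <;> ring

/-- The action of the free group on two generators `a, b` on `ℤ²`, with
`a` acting as `α` and `b` acting as `β`. -/
def affAction : FreeGroup Bool →* Equiv.Perm (ℤ × ℤ) :=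
  FreeGroup.lift (fun b : Bool => if b then alphaPerm else betaPerm)

/-! ### Auxiliary setup: the Schreier-chain group -/

@[simp] lemma alpha_apply (x y : ℤ) : alphaPerm (x, y) = (x + 2*y, y + 1) := rfl
@[simp] lemma beta_apply (x y : ℤ) : betaPerm (x, y) = (x + 1, 2*x + y) := rfl
@[simp] lemma alpha_inv_apply (x y : ℤ) : alphaPerm⁻¹ (x, y) = (x - 2*(y-1), y - 1) := rfl
@[simp] lemma beta_inv_apply (x y : ℤ) : betaPerm⁻¹ (x, y) = (x - 1, y - 2*(x-1)) := rfl

/-- Edge chains: finitely supported functions on (point, generator) pairs. -/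
abbrev EdgeChain := ((ℤ × ℤ) × Bool) →₀ ℤ

/-- Group recording, along with a permutation, the chain of Schreier-graph edges
traversed, as a function of the starting point. -/
@[ext] structure ChainGrp where
  ch : (ℤ × ℤ) → EdgeChain
  pm : Equiv.Perm (ℤ × ℤ)

namespace ChainGrp

noncomputable instance : Group ChainGrp where
  mul x y := ⟨fun p => y.ch p + x.ch (y.pm p), x.pm * y.pm⟩
  one := ⟨0, 1⟩
  inv x := ⟨fun p => -x.ch (x.pm⁻¹ p), x.pm⁻¹⟩
  mul_assoc := by
    rintro ⟨f, σ⟩ ⟨g, τ⟩ ⟨h, υ⟩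
    refine ChainGrp.ext (funext fun p => ?_) (mul_assoc _ _ _)
    show h p + (g (υ p) + f (τ (υ p))) = (h p + g (υ p)) + f ((τ * υ) p)
    rw [Equiv.Perm.mul_apply, add_assoc]
  one_mul := by
    rintro ⟨f, σ⟩
    refine ChainGrp.ext (funext fun p => ?_) (one_mul _)
    show f p + (0 : (ℤ × ℤ) → EdgeChain) (σ p) = f p
    simp
  mul_one := by
    rintro ⟨f, σ⟩
    refine ChainGrp.ext (funext fun p => ?_) (mul_one _)
    show (0 : (ℤ × ℤ) → EdgeChain) p + f ((1 : Equiv.Perm (ℤ × ℤ)) p) = f p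
    simp
  inv_mul_cancel := by
    rintro ⟨f, σ⟩
    refine ChainGrp.ext (funext fun p => ?_) (inv_mul_cancel _)
    show f p + -f (σ⁻¹ (σ p)) = (0 : (ℤ × ℤ) → EdgeChain) p
    simp

@[simp] lemma mul_ch (x y : ChainGrp) (p : ℤ × ℤ) :
    (x * y).ch p = y.ch p + x.ch (y.pm p) := rfl
@[simp] lemma mul_pm (x y : ChainGrp) : (x * y).pm = x.pm * y.pm := rfl
@[simp] lemma inv_ch (x : ChainGrp) (p : ℤ × ℤ) : (x⁻¹).ch p = -x.ch (x.pm⁻¹ p) := rfl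
@[simp] lemma inv_pm (x : ChainGrp) : (x⁻¹).pm = x.pm⁻¹ := rfl
@[simp] lemma one_ch (p : ℤ × ℤ) : (1 : ChainGrp).ch p = 0 := rfl
@[simp] lemma one_pm : (1 : ChainGrp).pm = 1 := rfl

/-- Projection to the permutation part, as a homomorphism. -/
def pmHom : ChainGrp →* Equiv.Perm (ℤ × ℤ) where
  toFun := ChainGrp.pm
  map_one' := rfl
  map_mul' _ _ := rfl

end ChainGrp

/-- The chain homomorphism on the free group. -/
noncomputable def Phi : FreeGroup Bool →* ChainGrp :=
  FreeGroup.lift (fun s : Bool =>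
    ⟨fun p => Finsupp.single (p, s) 1, if s then alphaPerm else betaPerm⟩)

notation "aF" => FreeGroup.of true
notation "bF" => FreeGroup.of false

@[simp] lemma affAction_a : affAction aF = alphaPerm := by
  simp [affAction, FreeGroup.lift_apply_of]

@[simp] lemma affAction_b : affAction bF = betaPerm := by
  simp [affAction, FreeGroup.lift_apply_of]

@[simp] lemma Phi_a : Phi aF = ⟨fun p => Finsupp.single (p, true) 1, alphaPerm⟩ := by
  simp [Phi, FreeGroup.lift_apply_of]

@[simp] lemma Phi_b : Phi bF = ⟨fun p => Finsupp.single (p, false) 1, betaPerm⟩ := by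
  simp [Phi, FreeGroup.lift_apply_of]

lemma Phi_pm (w : FreeGroup Bool) : (Phi w).pm = affAction w := by
  have h : ∀ x, (ChainGrp.pmHom.comp Phi) x =
      FreeGroup.lift (fun b : Bool => if b then alphaPerm else betaPerm) x := by
    intro x
    exact FreeGroup.lift_unique (ChainGrp.pmHom.comp Phi)
      (fun s => by cases s <;> simp [Phi, FreeGroup.lift_apply_of, ChainGrp.pmHom])
  exact h w

/-! ### The family of stabilizer elements -/

/-- `(a b⁻¹)²`, which fixes the diagonal pointwise. -/
noncomputable def uW : FreeGroup Bool := (aF * bF⁻¹)^2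

/-- Words reaching the diagonal points `(-n, -n)`. -/
noncomputable def gW : ℕ → FreeGroup Bool
  | 0 => 1
  | n+1 => bF⁻¹^(2*n+3) * aF⁻¹ * gW n

lemma beta_inv_pow (k : ℕ) (x y : ℤ) :
    (betaPerm⁻¹ ^ k) (x, y) = (x - k, y - 2*k*x + k^2 + k) := by
  induction k generalizing x y with
  | zero => simp
  | succ k ih =>
      rw [pow_succ, Equiv.Perm.mul_apply, beta_inv_apply, ih]
      simp only [Prod.mk.injEq]
      constructor <;> push_cast <;> ring

lemma gW_act (n : ℕ) : affAction (gW n) (0, 0) = (-(n:ℤ), -(n:ℤ)) := by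
  induction n with
  | zero => simp [gW]
  | succ n ih =>
      have : affAction (gW (n+1)) (0,0)
          = (betaPerm⁻¹ ^ (2*n+3)) (alphaPerm⁻¹ (affAction (gW n) (0,0))) := by
        simp [gW, map_mul, map_inv, map_pow, Equiv.Perm.mul_apply]
      rw [this, ih, alpha_inv_apply, beta_inv_pow]
      simp only [Prod.mk.injEq]
      constructor <;> push_cast <;> ring

lemma ab_inv_apply (x y : ℤ) :
    (alphaPerm * betaPerm⁻¹) (x, y) = (2*y - 3*x + 3, y - 2*x + 3) := by
  rw [Equiv.Perm.mul_apply, beta_inv_apply, alpha_apply]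
  simp only [Prod.mk.injEq]
  constructor <;> ring

lemma uW_act (t : ℤ) : affAction uW (t, t) = (t, t) := by
  have : affAction uW = (alphaPerm * betaPerm⁻¹)^2 := by
    simp [uW, map_pow, map_mul, map_inv]
  rw [this, sq, Equiv.Perm.mul_apply, ab_inv_apply, ab_inv_apply]
  simp only [Prod.mk.injEq]
  constructor <;> ring

lemma Phi_uW_ch (t : ℤ) :
    (Phi uW).ch (t, t) ((t - 1, 2 - t), false) = -1 := by
  have h : Phi uW = (Phi aF * (Phi bF)⁻¹) * (Phi aF * (Phi bF)⁻¹) := by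
    rw [uW, sq, map_mul, map_mul, map_inv]
  rw [h]
  simp only [ChainGrp.mul_ch, ChainGrp.inv_ch, ChainGrp.mul_pm, ChainGrp.inv_pm,
    Phi_a, Phi_b]
  rw [show ((betaPerm⁻¹) (t, t)) = (t - 1, 2 - t) by rw [beta_inv_apply]; ring_nf]
  rw [show ((alphaPerm * betaPerm⁻¹) (t, t)) = (3 - t, 3 - t) by
    rw [ab_inv_apply]; ring_nf]
  rw [show ((betaPerm⁻¹) (3 - t, 3 - t)) = (2 - t, t - 1) by
    rw [beta_inv_apply]; ring_nf]
  simp only [Finsupp.add_apply, Finsupp.neg_apply, Finsupp.single_apply]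
  have h1 : (t : ℤ) - 1 ≠ 2 - t := by omega
  simp [Prod.ext_iff, h1]

/-- Membership in the stabilizer, unfolded. -/
lemma mem_stab_iff (w : FreeGroup Bool) :
    w ∈ Subgroup.comap affAction
        (MulAction.stabilizer (Equiv.Perm (ℤ × ℤ)) ((0, 0) : ℤ × ℤ)) ↔
      affAction w (0, 0) = (0, 0) := by
  simp [Subgroup.mem_comap, MulAction.mem_stabilizer_iff, Equiv.Perm.smul_def]

/-- The stabilizer of `(0,0)` for the action of the free group `F₂ = ⟨a,b⟩` on `ℤ²`
via `a ↦ α`, `b ↦ β` is not finitely generated. -/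
theorem stabilizer_not_fg :
    ¬ (Subgroup.comap affAction
        (MulAction.stabilizer (Equiv.Perm (ℤ × ℤ)) ((0, 0) : ℤ × ℤ))).FG := by
  classical
  set H := Subgroup.comap affAction
      (MulAction.stabilizer (Equiv.Perm (ℤ × ℤ)) ((0, 0) : ℤ × ℤ)) with hH
  rintro ⟨S, hS⟩
  set T : Finset ((ℤ × ℤ) × Bool) := S.sup (fun s => ((Phi s).ch (0, 0)).support) with hT
  -- every stabilizer element has chain supported in T
  have key : ∀ w ∈ H, affAction w (0, 0) = (0, 0) ∧ ((Phi w).ch (0, 0)).support ⊆ T := by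
    intro w hw
    rw [← hS] at hw
    refine Subgroup.closure_induction
      (p := fun w _ => affAction w (0, 0) = (0, 0) ∧ ((Phi w).ch (0, 0)).support ⊆ T)
      ?_ ?_ ?_ ?_ hw
    · intro x hx
      constructor
      · have : x ∈ H := hS ▸ Subgroup.subset_closure hx
        exact (mem_stab_iff x).mp this
      · rw [hT]
        exact Finset.le_sup (f := fun s => ((Phi s).ch (0, 0)).support) hx
    · simp
    · rintro x y hx hy ⟨hx1, hx2⟩ ⟨hy1, hy2⟩
      have hmul : (Phi (x * y)).ch (0, 0) = (Phi y).ch (0, 0) + (Phi x).ch (0, 0) := by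
        rw [map_mul, ChainGrp.mul_ch, Phi_pm, hy1]
      constructor
      · rw [map_mul, Equiv.Perm.mul_apply, hy1, hx1]
      · rw [hmul]
        exact (Finsupp.support_add).trans (Finset.union_subset hy2 hx2)
    · rintro x hx ⟨hx1, hx2⟩
      have hinvpt : (affAction x)⁻¹ (0, 0) = (0, 0) := by
        conv_lhs => rw [← hx1]
        exact Equiv.symm_apply_apply _ _
      have hinv : (Phi x⁻¹).ch (0, 0) = -(Phi x).ch (0, 0) := by
        rw [map_inv, ChainGrp.inv_ch, Phi_pm, hinvpt]
      constructor
      · rw [map_inv, hinvpt]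
      · rw [hinv, Finsupp.support_neg]; exact hx2
  -- the family h n = gW n ⁻¹ * uW * gW n
  set N : ℕ := T.sup (fun e => e.1.2.natAbs) with hN
  set q : ℤ × ℤ := (-(N:ℤ), -(N:ℤ)) with hq
  have hgq : affAction (gW N) (0, 0) = q := gW_act N
  have hinvq : (affAction (gW N))⁻¹ q = (0, 0) := by
    rw [← hgq]; exact Equiv.symm_apply_apply _ _
  set h : FreeGroup Bool := (gW N)⁻¹ * uW * gW N with hh
  have hmem : h ∈ H := by
    rw [hH, mem_stab_iff]
    rw [hh, map_mul, map_mul, map_inv, Equiv.Perm.mul_apply, Equiv.Perm.mul_apply,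
      hgq, uW_act, hinvq]
  have hch : (Phi h).ch (0, 0) = (Phi uW).ch q := by
    rw [hh, map_mul, map_mul, map_inv]
    simp only [ChainGrp.mul_ch, ChainGrp.inv_ch, ChainGrp.mul_pm, ChainGrp.inv_pm,
      Phi_pm]
    rw [hgq, uW_act, hinvq]
    abel
  have hcoef : (Phi h).ch (0, 0) ((-(N:ℤ) - 1, 2 + (N:ℤ)), false) = -1 := by
    rw [hch, hq]
    have := Phi_uW_ch (-(N:ℤ))
    rw [show (2 : ℤ) - -(N:ℤ) = 2 + (N:ℤ) by ring] at this
    exact this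
  have hsupp : ((-(N:ℤ) - 1, 2 + (N:ℤ)), false) ∈ ((Phi h).ch (0, 0)).support := by
    rw [Finsupp.mem_support_iff, hcoef]; norm_num
  have hinT := (key h hmem).2 hsupp
  have hle : ((2 + (N:ℤ)).natAbs) ≤ N := by
    have h2 := Finset.le_sup (s := T) (f := fun e : ((ℤ × ℤ) × Bool) => e.1.2.natAbs) hinT
    rw [← hN] at h2
    exact h2
  omega
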